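/- Let W be a symmetric n×n real matrix with n ≥ 2. Then there exists t₀ > 0 such that for all t with 0 < t < t₀, the communicability kernel K = exp(tW) is a proximity on {1,…,n}: K_xy + K_xz − K_yz ≤ K_xx for all x, y, z, with strict inequality whenever z = y and y ≠ x. -/

import Mathlib

open NormedSpace in
/-- For a symmetric `n × n` real matrix `W` with `n ≥ 2`, there exists
`t₀ > 0` such that for all `0 < t < t₀` the communicability kernel `K = exp(tW)` is a
proximity on `{1,…,n}`. -/
theorem communicability_kernel_proximity_small_t {n : ℕ} (hn : 2 ≤ n)
    (W : Matrix (Fin n) (Fin n) ℝ) (hW_symm : W.IsSymm) :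
    ∃ t₀ : ℝ, 0 < t₀ ∧ ∀ t : ℝ, 0 < t → t < t₀ →
      (∀ x y z : Fin n, exp (t • W) x y + exp (t • W) x z - exp (t • W) y z
          ≤ exp (t • W) x x) ∧
      (∀ x y : Fin n, y ≠ x →
        exp (t • W) x y + exp (t • W) x y - exp (t • W) y y < exp (t • W) x x) := by
  classical
  -- entrywise continuity of t ↦ exp (t • W)
  have hcont : ∀ x y : Fin n, Continuous fun t : ℝ => exp (t • W) x y := by
    intro x y
    have h1 : Continuous fun t : ℝ => exp (t • W) := by
      letI : SeminormedRing (Matrix (Fin n) (Fin n) ℝ) := Matrix.linftyOpSemiNormedRing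
      letI : NormedRing (Matrix (Fin n) (Fin n) ℝ) := Matrix.linftyOpNormedRing
      letI : NormedAlgebra ℝ (Matrix (Fin n) (Fin n) ℝ) := Matrix.linftyOpNormedAlgebra
      letI : NormedAlgebra ℚ (Matrix (Fin n) (Fin n) ℝ) := NormedAlgebra.restrictScalars ℚ ℝ _
      exact exp_continuous.comp (continuous_id.smul continuous_const)
    exact (continuous_apply y).comp ((continuous_apply x).comp h1)
  -- strictness for the triples not involving x in positions y, z
  have key : ∀ x y z : Fin n, y ≠ x → z ≠ x →
      ∀ᶠ t : ℝ in nhds 0,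
        exp (t • W) x y + exp (t • W) x z - exp (t • W) y z < exp (t • W) x x := by
    intro x y z hy hz
    have hc : Continuous fun t : ℝ =>
        exp (t • W) x y + exp (t • W) x z - exp (t • W) y z :=
      ((hcont x y).add (hcont x z)).sub (hcont y z)
    have h0 : exp ((0:ℝ) • W) x y + exp ((0:ℝ) • W) x z - exp ((0:ℝ) • W) y z
        < exp ((0:ℝ) • W) x x := by
      rw [zero_smul, exp_zero]
      simp only [Matrix.one_apply, if_neg (Ne.symm hy), if_neg (Ne.symm hz), if_pos rfl]
      split <;> norm_num
    exact hc.continuousAt.eventually_lt (hcont x x).continuousAt h0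
  have all : ∀ᶠ t : ℝ in nhds 0, ∀ x y z : Fin n, y ≠ x → z ≠ x →
      exp (t • W) x y + exp (t • W) x z - exp (t • W) y z < exp (t • W) x x := by
    rw [Filter.eventually_all]; intro x
    rw [Filter.eventually_all]; intro y
    rw [Filter.eventually_all]; intro z
    by_cases hy : y = x
    · exact Filter.Eventually.of_forall fun t h => absurd hy h
    · by_cases hz : z = x
      · exact Filter.Eventually.of_forall fun t _ h => absurd hz h
      · exact (key x y z hy hz).mono fun t h _ _ => h
  rw [Metric.eventually_nhds_iff] at all
  obtain ⟨ε, hε, hball⟩ := all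
  refine ⟨ε, hε, fun t ht htε => ?_⟩
  have hdist : dist t 0 < ε := by
    rw [Real.dist_eq, sub_zero, abs_of_pos ht]; exact htε
  have P := hball hdist
  -- symmetry of exp (t • W)
  have hsm : (t • W).IsSymm := by
    unfold Matrix.IsSymm
    rw [Matrix.transpose_smul, hW_symm]
  have hKsymm : (exp (t • W)).IsSymm := hsm.exp
  constructor
  · intro x y z
    by_cases hy : y = x
    · rw [hy]; linarith
    · by_cases hz : z = x
      · rw [hz]
        have h := hKsymm.apply x y
        linarith
      · exact (P x y z hy hz).le
  · intro x y hy
    have := P x y y hy hy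
    linarith
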